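/- Let Z ∈ ℝ^{n×n} be a real symmetric matrix and let c be a stable δ-MC-WL coloring for Z. Then c refines the projection Π(Z) of Z onto the PSD cone; that is, c(i,j) = c(p,q) implies Π(Z)_{ij} = Π(Z)_{pq} for all index pairs. -/

import Mathlib

/-- The multiset aggregated in the δ-MC-WL update for index pair `(i, j)`:
`{{(c(i,u), M_{uj}) : u, M_{uj} ≠ 0}} + {{(c(u,j), M_{iu}) : u, M_{iu} ≠ 0}}`. -/
noncomputable def deltaMCWLMultiset {n : ℕ} {Γ : Type*} (c : Fin n × Fin n → Γ)
    (M : Matrix (Fin n) (Fin n) ℝ) (i j : Fin n) : Multiset (Γ × ℝ) :=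
  (Finset.univ.filter (fun u => M u j ≠ 0)).val.map (fun u => (c (i, u), M u j)) +
  (Finset.univ.filter (fun u => M i u ≠ 0)).val.map (fun u => (c (u, j), M i u))

/-- `c` is a stable δ-MC-WL coloring for `M`. -/
def IsStableDeltaMCWL {n : ℕ} {Γ : Type*} (c : Fin n × Fin n → Γ)
    (M : Matrix (Fin n) (Fin n) ℝ) : Prop :=
  ∀ i j p q : Fin n, c (i, j) = c (p, q) →
    M i j = M p q ∧ (i = j ↔ p = q) ∧
      deltaMCWLMultiset c M i j = deltaMCWLMultiset c M p q

/-- The coloring `c` refines the matrix `A`. -/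
def Refines {n : ℕ} {Γ : Type*} (c : Fin n × Fin n → Γ)
    (A : Matrix (Fin n) (Fin n) ℝ) : Prop :=
  ∀ i j p q : Fin n, c (i, j) = c (p, q) → A i j = A p q

/-- The Frobenius norm of a real square matrix. -/
noncomputable def frobNorm {n : ℕ} (A : Matrix (Fin n) (Fin n) ℝ) : ℝ :=
  Real.sqrt (∑ i, ∑ j, A i j ^ 2)

section Aux

open Matrix Polynomial

variable {n : ℕ} {Γ : Type*} {c : Fin n × Fin n → Γ} {Z : Matrix (Fin n) (Fin n) ℝ}

open scoped Classical in
lemma multiset_sum_eq {A : Matrix (Fin n) (Fin n) ℝ} (hA : Refines c A)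
    (i j : Fin n) :
    ((deltaMCWLMultiset c Z i j).map
      (fun pr => (if h : ∃ x : Fin n × Fin n, c x = pr.1 then A h.choose.1 h.choose.2 else 0) * pr.2)).sum
      = (A * Z + Z * A) i j := by
  have hg : ∀ x : Fin n × Fin n,
      (if h : ∃ y : Fin n × Fin n, c y = c x then A h.choose.1 h.choose.2 else 0) = A x.1 x.2 := by
    intro x
    have hex : ∃ y : Fin n × Fin n, c y = c x := ⟨x, rfl⟩
    rw [dif_pos hex]
    have := hex.choose_spec
    exact hA _ _ _ _ (by simpa using this)
  unfold deltaMCWLMultiset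
  rw [Multiset.map_add, Multiset.sum_add]
  have h1 : ((Finset.univ.filter (fun u => Z u j ≠ 0)).val.map (fun u => (c (i, u), Z u j))).map
      (fun pr => (if h : ∃ x : Fin n × Fin n, c x = pr.1 then A h.choose.1 h.choose.2 else 0) * pr.2)
      = (Finset.univ.filter (fun u => Z u j ≠ 0)).val.map (fun u => A i u * Z u j) := by
    rw [Multiset.map_map]
    exact Multiset.map_congr rfl (fun u _ => by
      simp only [Function.comp_apply]; exact congrArg (· * Z u j) (hg (i, u)))
  have h2 : ((Finset.univ.filter (fun u => Z i u ≠ 0)).val.map (fun u => (c (u, j), Z i u))).map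
      (fun pr => (if h : ∃ x : Fin n × Fin n, c x = pr.1 then A h.choose.1 h.choose.2 else 0) * pr.2)
      = (Finset.univ.filter (fun u => Z i u ≠ 0)).val.map (fun u => A u j * Z i u) := by
    rw [Multiset.map_map]
    exact Multiset.map_congr rfl (fun u _ => by
      simp only [Function.comp_apply]; exact congrArg (· * Z i u) (hg (u, j)))
  rw [h1, h2]
  have e1 : ((Finset.univ.filter (fun u => Z u j ≠ 0)).val.map (fun u => A i u * Z u j)).sum
      = ∑ u, A i u * Z u j := by
    rw [← Finset.sum, Finset.sum_filter_of_ne]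
    intro u _ h h0
    exact h (by rw [h0, mul_zero])
  have e2 : ((Finset.univ.filter (fun u => Z i u ≠ 0)).val.map (fun u => A u j * Z i u)).sum
      = ∑ u, A u j * Z i u := by
    rw [← Finset.sum, Finset.sum_filter_of_ne]
    intro u _ h h0
    exact h (by rw [h0, mul_zero])
  rw [e1, e2]
  simp [Matrix.add_apply, Matrix.mul_apply, mul_comm]

lemma refines_step (hc : IsStableDeltaMCWL c Z) {A : Matrix (Fin n) (Fin n) ℝ}
    (hA : Refines c A) : Refines c (A * Z + Z * A) := by
  intro i j p q h
  obtain ⟨-, -, hm⟩ := hc i j p q h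
  rw [← multiset_sum_eq hA i j, ← multiset_sum_eq hA p q, hm]

lemma refines_pow (hc : IsStableDeltaMCWL c Z) (k : ℕ) : Refines c (Z ^ k) := by
  induction k with
  | zero =>
    intro i j p q h
    obtain ⟨-, hiff, -⟩ := hc i j p q h
    simp only [pow_zero, Matrix.one_apply]
    by_cases hij : i = j
    · rw [if_pos hij, if_pos (hiff.mp hij)]
    · rw [if_neg hij, if_neg (fun hpq => hij (hiff.mpr hpq))]
  | succ k ih =>
    have h2 := refines_step hc ih
    have key : Z ^ k * Z + Z * Z ^ k = (2 : ℝ) • Z ^ (k + 1) := by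
      rw [← pow_succ, ← pow_succ', two_smul]
    rw [key] at h2
    intro i j p q h
    have := h2 i j p q h
    simp only [Matrix.smul_apply, smul_eq_mul] at this
    linarith

lemma refines_aeval (hc : IsStableDeltaMCWL c Z) (p : Polynomial ℝ) :
    Refines c (Polynomial.aeval Z p) := by
  intro i j pp q h
  rw [Polynomial.aeval_eq_sum_range]
  simp only [Matrix.sum_apply, Matrix.smul_apply, smul_eq_mul]
  exact Finset.sum_congr rfl fun k _ => by rw [refines_pow hc k i j pp q h]

/-- Conjugation by a unitary matrix as an algebra homomorphism. -/
noncomputable def unitaryConjAlgHom (U : Matrix (Fin n) (Fin n) ℝ)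
    (h1 : U * star U = 1) (h2 : star U * U = 1) :
    Matrix (Fin n) (Fin n) ℝ →ₐ[ℝ] Matrix (Fin n) (Fin n) ℝ where
  toFun M := U * M * star U
  map_one' := by rw [mul_one, h1]
  map_mul' M N := by
    have key : star U * (U * (N * star U)) = N * star U := by
      rw [← mul_assoc, h2, one_mul]
    simp only [mul_assoc, key]
  map_zero' := by simp
  map_add' M N := by rw [mul_add, add_mul]
  commutes' r := by
    rw [Algebra.algebraMap_eq_smul_one, mul_smul_comm, smul_mul_assoc, mul_one, h1]

lemma aeval_diagonal' (d : Fin n → ℝ) (p : ℝ[X]) :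
    aeval (Matrix.diagonal d) p = Matrix.diagonal (fun i => p.eval (d i)) := by
  have h := aeval_algHom_apply (Matrix.diagonalAlgHom (n := Fin n) (α := ℝ) ℝ) d p
  have hd : ∀ e : Fin n → ℝ, Matrix.diagonalAlgHom (n := Fin n) (α := ℝ) ℝ e = diagonal e :=
    fun _ => rfl
  rw [hd, hd] at h
  have hv : (aeval d p : Fin n → ℝ) = fun i => p.eval (d i) := by
    funext i
    have h2 := aeval_algHom_apply (Pi.evalAlgHom ℝ (fun _ : Fin n => ℝ) i) d p
    simpa [coe_aeval_eq_eval] using h2.symm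
  rw [h, hv]

lemma aeval_conj (U : Matrix (Fin n) (Fin n) ℝ)
    (h1 : U * star U = 1) (h2 : star U * U = 1)
    (B : Matrix (Fin n) (Fin n) ℝ) (p : ℝ[X]) :
    aeval (U * B * star U) p = U * aeval B p * star U :=
  aeval_algHom_apply (unitaryConjAlgHom U h1 h2) B p

lemma sum_mul_eq_trace (A B : Matrix (Fin n) (Fin n) ℝ) (hB : ∀ i j, B j i = B i j) :
    ∑ i, ∑ j, A i j * B i j = Matrix.trace (A * B) := by
  rw [Matrix.trace]
  simp only [Matrix.diag_apply, Matrix.mul_apply]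
  exact Finset.sum_congr rfl fun i _ => Finset.sum_congr rfl fun j _ => by rw [hB i j]

lemma psd_diag_nonneg {B : Matrix (Fin n) (Fin n) ℝ} (hB : B.PosSemidef) (i : Fin n) :
    0 ≤ B i i := by
  exact hB.diag_nonneg

end Aux

/-- A stable δ-MC-WL coloring for a real symmetric matrix `Z` refines the
projection of `Z` onto the PSD cone, i.e. the (unique) symmetric PSD matrix `P` minimizing
the Frobenius norm `‖P - Z‖_F` over all symmetric PSD matrices. -/
theorem stable_deltaMCWL_refines_psd_projection {n : ℕ} {Γ : Type*}
    (Z : Matrix (Fin n) (Fin n) ℝ) (hZ : Z.IsSymm)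
    (c : Fin n × Fin n → Γ) (hc : IsStableDeltaMCWL c Z)
    (P : Matrix (Fin n) (Fin n) ℝ) (hP : P.PosSemidef)
    (hmin : ∀ Q : Matrix (Fin n) (Fin n) ℝ, Q.PosSemidef →
      frobNorm (P - Z) ≤ frobNorm (Q - Z)) :
    Refines c P := by
  classical
  open Matrix Polynomial in
  -- spectral decomposition
  have hH : Z.IsHermitian := by
    rw [Matrix.IsHermitian, Matrix.conjTranspose_eq_transpose_of_trivial]; exact hZ
  set U : Matrix (Fin n) (Fin n) ℝ := (hH.eigenvectorUnitary : Matrix (Fin n) (Fin n) ℝ) with hUdef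
  set ev : Fin n → ℝ := hH.eigenvalues with hevdef
  have hU1 : U * star U = 1 := Matrix.mem_unitaryGroup_iff.mp hH.eigenvectorUnitary.2
  have hU2 : star U * U = 1 := Matrix.mem_unitaryGroup_iff'.mp hH.eigenvectorUnitary.2
  have hspec : Z = U * Matrix.diagonal ev * star U := by
    have := hH.spectral_theorem
    simpa [RCLike.ofReal_real_eq_id] using this
  set Zp : Matrix (Fin n) (Fin n) ℝ :=
    U * Matrix.diagonal (fun i => max (ev i) 0) * star U with hZpdef
  set Zm : Matrix (Fin n) (Fin n) ℝ :=
    U * Matrix.diagonal (fun i => max (-(ev i)) 0) * star U with hZmdef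
  -- basic facts
  have hZp_psd : Zp.PosSemidef := by
    have hd : (Matrix.diagonal (fun i => max (ev i) 0)).PosSemidef :=
      Matrix.posSemidef_diagonal_iff.mpr (fun i => le_max_right _ _)
    have := hd.mul_mul_conjTranspose_same U
    simpa [Matrix.star_eq_conjTranspose, hZpdef] using this
  have hZm_psd : Zm.PosSemidef := by
    have hd : (Matrix.diagonal (fun i => max (-(ev i)) 0)).PosSemidef :=
      Matrix.posSemidef_diagonal_iff.mpr (fun i => le_max_right _ _)
    have := hd.mul_mul_conjTranspose_same U
    simpa [Matrix.star_eq_conjTranspose, hZmdef] using this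
  have hsub : Zp - Zm = Z := by
    rw [hZpdef, hZmdef, hspec, ← Matrix.sub_mul, ← Matrix.mul_sub, Matrix.diagonal_sub]
    have hfun : (fun i => max (ev i) 0 - max (-(ev i)) 0) = ev := by
      funext i
      rcases le_total (ev i) 0 with h | h
      · rw [max_eq_right h, max_eq_left (by linarith)]; ring
      · rw [max_eq_left h, max_eq_right (by linarith)]; ring
    rw [hfun]
  have hmulzero : Zp * Zm = 0 := by
    rw [hZpdef, hZmdef]
    have key : Matrix.diagonal (fun i => max (ev i) 0) * (star U * U) *
        Matrix.diagonal (fun i => max (-(ev i)) 0) = 0 := by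
      rw [hU2, mul_one, Matrix.diagonal_mul_diagonal]
      have : (fun i => max (ev i) 0 * max (-(ev i)) 0) = fun _ => (0 : ℝ) := by
        funext i
        rcases le_total (ev i) 0 with h | h
        · rw [max_eq_right h, zero_mul]
        · rw [max_eq_right (by linarith : -(ev i) ≤ 0), mul_zero]
      rw [this, Matrix.diagonal_zero]
    calc U * Matrix.diagonal (fun i => max (ev i) 0) * star U *
          (U * Matrix.diagonal (fun i => max (-(ev i)) 0) * star U)
        = U * (Matrix.diagonal (fun i => max (ev i) 0) * (star U * U) *
            Matrix.diagonal (fun i => max (-(ev i)) 0)) * star U := by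
          simp only [Matrix.mul_assoc]
      _ = 0 := by rw [key, Matrix.mul_zero, Matrix.zero_mul]
  have hZm_symm : ∀ i j, Zm j i = Zm i j := by
    intro i j
    have h := congrFun (congrFun hZm_psd.1 i) j
    simpa [Matrix.conjTranspose_apply] using h
  -- c refines Zp via polynomial interpolation
  have hrefZp : Refines c Zp := by
    have hval : (fun i => Polynomial.eval (ev i)
        (Lagrange.interpolate (Finset.univ.image ev) id (fun x => max x 0)))
        = fun i => max (ev i) 0 := by
      funext i
      have hmem : ev i ∈ Finset.univ.image ev := Finset.mem_image_of_mem ev (Finset.mem_univ i)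
      simpa using Lagrange.eval_interpolate_at_node (v := id) (r := fun x => max x 0)
        (Set.injOn_id _) hmem
    have hZp_eq : Zp = Polynomial.aeval Z
        (Lagrange.interpolate (Finset.univ.image ev) id (fun x => max x 0)) := by
      rw [hspec, aeval_conj U hU1 hU2, aeval_diagonal', hval]
    rw [hZp_eq]
    exact refines_aeval hc _
  -- the analytic part: P = Zp entrywise
  have hPZp : ∀ i j, P i j = Zp i j := by
    -- abbreviations
    set S : Matrix (Fin n) (Fin n) ℝ → ℝ := fun A => ∑ i, ∑ j, A i j ^ 2 with hSdef
    have hS_nonneg : ∀ A, 0 ≤ S A := fun A =>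
      Finset.sum_nonneg fun i _ => Finset.sum_nonneg fun j _ => sq_nonneg _
    have hPZ : P - Z = (P - Zp) + Zm := by rw [← hsub]; abel
    set T : ℝ := ∑ i, ∑ j, (P - Zp) i j * Zm i j with hTdef
    have hexpand : S (P - Z) = S (P - Zp) + 2 * T + S Zm := by
      rw [hPZ, hSdef, hTdef]
      have hpt : ∀ i j, (((P - Zp) + Zm) i j) ^ 2 =
          (P - Zp) i j ^ 2 + 2 * ((P - Zp) i j * Zm i j) + Zm i j ^ 2 := by
        intro i j; simp only [Matrix.add_apply]; ring
      calc ∑ i, ∑ j, (((P - Zp) + Zm) i j) ^ 2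
          = ∑ i, ∑ j, ((P - Zp) i j ^ 2 + 2 * ((P - Zp) i j * Zm i j) + Zm i j ^ 2) := by
            exact Finset.sum_congr rfl fun i _ => Finset.sum_congr rfl fun j _ => hpt i j
        _ = (∑ i, ∑ j, (P - Zp) i j ^ 2) + 2 * (∑ i, ∑ j, (P - Zp) i j * Zm i j)
              + ∑ i, ∑ j, Zm i j ^ 2 := by
            simp only [Finset.sum_add_distrib, Finset.mul_sum]
    have hT_nonneg : 0 ≤ T := by
      rw [hTdef, sum_mul_eq_trace _ _ hZm_symm, Matrix.sub_mul, Matrix.trace_sub,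
        hmulzero, Matrix.trace_zero, sub_zero]
      -- 0 ≤ trace (P * Zm)
      have hB : (star U * P * U).PosSemidef := by
        have := hP.conjTranspose_mul_mul_same (B := U)
        simpa [Matrix.star_eq_conjTranspose] using this
      have htr : Matrix.trace (P * Zm)
          = ∑ i, (star U * P * U) i i * max (-(ev i)) 0 := by
        rw [hZmdef, show P * (U * Matrix.diagonal (fun i => max (-(ev i)) 0) * star U)
            = (P * U * Matrix.diagonal (fun i => max (-(ev i)) 0)) * star U by
              simp only [Matrix.mul_assoc],
          Matrix.trace_mul_comm,
          show star U * (P * U * Matrix.diagonal (fun i => max (-(ev i)) 0))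
            = (star U * P * U) * Matrix.diagonal (fun i => max (-(ev i)) 0) by
              simp only [Matrix.mul_assoc]]
        simp [Matrix.trace, Matrix.diag, Matrix.mul_diagonal]
      rw [htr]
      exact Finset.sum_nonneg fun i _ =>
        mul_nonneg (psd_diag_nonneg hB i) (le_max_right _ _)
    have hZpZ : Zp - Z = Zm := by rw [← hsub]; abel
    have hle : frobNorm (P - Z) ≤ frobNorm Zm := by rw [← hZpZ]; exact hmin Zp hZp_psd
    have hle' : Real.sqrt (S (P - Z)) ≤ Real.sqrt (S Zm) := hle
    have hSle : S (P - Z) ≤ S Zm := by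
      calc S (P - Z) = Real.sqrt (S (P - Z)) ^ 2 := (Real.sq_sqrt (hS_nonneg _)).symm
        _ ≤ Real.sqrt (S Zm) ^ 2 := pow_le_pow_left₀ (Real.sqrt_nonneg _) hle' 2
        _ = S Zm := Real.sq_sqrt (hS_nonneg _)
    have hzero : S (P - Zp) = 0 := by
      have h0 := hS_nonneg (P - Zp)
      linarith [hexpand, hSle, hT_nonneg]
    have hzero' : ∑ i, ∑ j, (P - Zp) i j ^ 2 = 0 := hzero
    intro i j
    have hij : ∑ j, (P - Zp) i j ^ 2 = 0 :=
      (Finset.sum_eq_zero_iff_of_nonneg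
        (fun i _ => Finset.sum_nonneg fun j _ => sq_nonneg _)).mp hzero' i (Finset.mem_univ i)
    have h2 : (P - Zp) i j ^ 2 = 0 :=
      (Finset.sum_eq_zero_iff_of_nonneg (fun j _ => sq_nonneg _)).mp hij j (Finset.mem_univ j)
    have h3 : (P - Zp) i j = 0 := by
      have := pow_eq_zero_iff (n := 2) (by norm_num) |>.mp h2
      exact this
    have h4 : P i j - Zp i j = 0 := by simpa [Matrix.sub_apply] using h3
    linarith
  intro i j p q h
  rw [hPZp i j, hPZp p q]
  exact hrefZp i j p q h
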